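/- Let A = (Q, E, s, F) be a Wheeler r-GNFA, let ≤ be a Wheeler order on A, and let α ∈ Σ* with α ≠ ε. Let h* be defined as in the context. If h* > |G^≺(α)|, and f is an integer with |G^≺(α)| < f ≤ |Q| such that some β ∈ I_{Q[f]} satisfies β ≺ α, then Q[f] ∈ G_⊣(α). -/

import Mathlib

/-- Strict co-lexicographic order: `α ≺ β` iff `α.reverse` is lexicographically
smaller than `β.reverse`. The empty string is the minimum. -/
def ColexLt {σ : Type*} [LinearOrder σ] (α β : List σ) : Prop :=
  List.Lex (· < ·) α.reverse β.reverse

/-- Non-strict co-lexicographic order `α ≼ β`. -/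
def ColexLe {σ : Type*} [LinearOrder σ] (α β : List σ) : Prop :=
  ColexLt α β ∨ α = β

/-- `α` is a strict suffix of `β`. -/
def IsStrictSuffix {σ : Type*} (α β : List σ) : Prop :=
  α <:+ β ∧ α ≠ β

/-- `p(α, k)`: the prefix of `α` of length `k`. -/
def pref {σ : Type*} (α : List σ) (k : ℕ) : List σ := α.take k

/-- `s(α, k)`: the suffix of `α` of length `k`. -/
def suff {σ : Type*} (α : List σ) (k : ℕ) : List σ := α.drop (α.length - k)

/-- The 1-based rank of a state in a finite linear order: `rankQ u = i` means
`u = Q[i]` in the enumeration `Q[1] < Q[2] < ⋯ < Q[|Q|]`. -/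
noncomputable def rankQ {Q : Type*} [Fintype Q] [LinearOrder Q] (u : Q) : ℕ :=
  {v : Q | v ≤ u}.ncard

/-- `Q[i, j] = {Q[i], …, Q[j]}` (empty if `i > j`). -/
def Qiv (Q : Type*) [Fintype Q] [LinearOrder Q] (i j : ℕ) : Set Q :=
  {u | i ≤ rankQ u ∧ rankQ u ≤ j}

/-- A generalized nondeterministic finite automaton: a finite set of
string-labeled edges `E ⊆ Q × Q × Σ*`, an initial state `s`, final states `F`. -/
structure GNFA (σ Q : Type*) where
  E : Finset (Q × Q × List σ)
  s : Q
  F : Finset Q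

namespace GNFA

variable {σ Q : Type*}

/-- `I A u β` means `β ∈ I_u`: `β` is obtained by concatenating the edge labels
along some path from `s` to `u` (in particular `ε ∈ I_s`). -/
inductive I (A : GNFA σ Q) : Q → List σ → Prop
  | base : I A A.s []
  | step {u v : Q} {α ρ : List σ} : I A u α → (u, v, ρ) ∈ A.E → I A v (α ++ ρ)

/-- Reachability along edges. -/
def Reach (A : GNFA σ Q) : Q → Q → Prop :=
  Relation.ReflTransGen (fun x y => ∃ ρ, (x, y, ρ) ∈ A.E)

/-- Every state is reachable from the initial state and is co-reachable
(final or allows reaching a final state). -/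
def Standard (A : GNFA σ Q) : Prop :=
  (∀ u, A.Reach A.s u) ∧ ∀ u, ∃ f ∈ A.F, A.Reach u f

/-- An ε-walk from `u` to `v`: a (possibly empty) sequence of ε-labeled edges. -/
def EpsWalk (A : GNFA σ Q) : Q → Q → Prop :=
  Relation.ReflTransGen (fun x y => (x, y, ([] : List σ)) ∈ A.E)

/-- An `r`-GNFA: all edge labels have length at most `r`. -/
def Bounded (A : GNFA σ Q) (r : ℕ) : Prop := ∀ e ∈ A.E, e.2.2.length ≤ r

/-- A GNFA without ε-transitions: every edge label is nonempty. -/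
def NoEps (A : GNFA σ Q) : Prop := ∀ e ∈ A.E, e.2.2 ≠ []

/-- `λ(u)`: the set of strings labeling some edge entering `u`. -/
def lab (A : GNFA σ Q) (u : Q) : Set (List σ) := {ρ | ∃ u', (u', u, ρ) ∈ A.E}

/-- `G_⊣(α)`: states `u` such that some `β ∈ I_u` has `α` as a suffix. -/
def Gsuf (A : GNFA σ Q) (α : List σ) : Set Q := {u | ∃ β, I A u β ∧ α <:+ β}

/-- `G*(α)`: states reached by an edge whose label has `α` as a suffix. -/
def Gstar (A : GNFA σ Q) (α : List σ) : Set Q := {u | ∃ ρ ∈ A.lab u, α <:+ ρ}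

section Colex
variable [LinearOrder σ]

/-- The preorder `u ≼_A v`. -/
def Preceq (A : GNFA σ Q) (u v : Q) : Prop :=
  ∀ α β, I A u α → I A v β →
    ¬((I A u α ∧ I A v α) ∧ (I A u β ∧ I A v β)) → ColexLt α β

/-- `G^≺(α)`: states `u` such that every `β ∈ I_u` satisfies `β ≺ α`. -/
def Gprec (A : GNFA σ Q) (α : List σ) : Set Q := {u | ∀ β, I A u β → ColexLt β α}

/-- `G^≺_⊣(α) = G^≺(α) ∪ G_⊣(α)`. -/
def GprecSuf (A : GNFA σ Q) (α : List σ) : Set Q := A.Gprec α ∪ A.Gsuf α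

/-- The linear order on `Q` is a Wheeler order on `A` (Axioms 1–4). -/
def IsWheeler [LinearOrder Q] (A : GNFA σ Q) : Prop :=
  (∀ u v : Q, u ≤ v → A.Preceq u v) ∧
  (∀ u : Q, A.s ≤ u) ∧
  (∀ u' u v' v : Q, ∀ ρ ρ' : List σ, (u', u, ρ) ∈ A.E → (v', v, ρ') ∈ A.E →
      u < v → ¬IsStrictSuffix ρ' ρ → ColexLe ρ ρ') ∧
  (∀ u' u v' v : Q, ∀ ρ : List σ, (u', u, ρ) ∈ A.E → (v', v, ρ) ∈ A.E →
      u < v → u' ≤ v')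

end Colex

section Indexed
variable [Fintype Q] [LinearOrder Q]

/-- `out(Q[1, m], ρ)`: number of edges labeled `ρ` leaving states in `Q[1, m]`. -/
noncomputable def outC (A : GNFA σ Q) (m : ℕ) (ρ : List σ) : ℕ :=
  {e : Q × Q × List σ | e ∈ A.E ∧ rankQ e.1 ≤ m ∧ e.2.2 = ρ}.ncard

/-- `in(Q[1, m], ρ)`: number of edges labeled `ρ` entering states in `Q[1, m]`. -/
noncomputable def inC (A : GNFA σ Q) (m : ℕ) (ρ : List σ) : ℕ :=
  {e : Q × Q × List σ | e ∈ A.E ∧ rankQ e.2.1 ≤ m ∧ e.2.2 = ρ}.ncard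

/-- `A_max[i]`: the largest `j` such that there is an ε-walk from `Q[j]` to `Q[i]`. -/
noncomputable def Amax (A : GNFA σ Q) (i : ℕ) : ℕ :=
  sSup {j | ∃ u v : Q, rankQ u = i ∧ rankQ v = j ∧ A.EpsWalk v u}

/-- `A_min[i]`: the smallest `j` such that there is an ε-walk from `Q[j]` to `Q[i]`. -/
noncomputable def Amin (A : GNFA σ Q) (i : ℕ) : ℕ :=
  sInf {j | ∃ u v : Q, rankQ u = i ∧ rankQ v = j ∧ A.EpsWalk v u}

variable [LinearOrder σ]

/-- `f_k = out(Q[1, |G^≺(p(α, |α|−k))|], s(α, k))`. -/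
noncomputable def fk (A : GNFA σ Q) (α : List σ) (k : ℕ) : ℕ :=
  A.outC ((A.Gprec (pref α (α.length - k))).ncard) (suff α k)

/-- `g_k = out(Q[1, |G^≺_⊣(p(α, |α|−k))|], s(α, k))`. -/
noncomputable def gk (A : GNFA σ Q) (α : List σ) (k : ℕ) : ℕ :=
  A.outC ((A.GprecSuf (pref α (α.length - k))).ncard) (suff α k)

/-- The property defining `j*` in Lemmas 2 and 4 (largest `j` satisfying it):
(i) `in(Q[1, j], s(α, k)) ≤ f_k` for every `0 < k < min{r+1, |α|}`; and
(ii) `ρ ≺ α` for every `ρ ∈ Σ^k ∩ λ(Q[h])`, every `1 ≤ h ≤ j`, every `0 < k < r+1`. -/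
def Jcond (A : GNFA σ Q) (r : ℕ) (α : List σ) (j : ℕ) : Prop :=
  (∀ k, 0 < k → k < min (r + 1) α.length → A.inC j (suff α k) ≤ A.fk α k) ∧
  (∀ k, 0 < k → k < r + 1 → ∀ h, 1 ≤ h → h ≤ j → ∀ u : Q, rankQ u = h →
      ∀ ρ : List σ, ρ.length = k → ρ ∈ A.lab u → ColexLt ρ α)

/-- The property defining `i*` (largest `i ≤ |Q|` satisfying it):
if `i ≥ 1` then `Q[i] ∈ G*(α)`. -/
def Icond (A : GNFA σ Q) (α : List σ) (i : ℕ) : Prop :=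
  1 ≤ i → ∃ u : Q, rankQ u = i ∧ u ∈ A.Gstar α

/-- The property defining `j°` (smallest `j ≤ |Q|` satisfying it):
`in(Q[1, j], s(α, k)) ≥ g_k` for every `0 < k < min{r+1, |α|}` with `g_k > f_k`. -/
def Jcond2 (A : GNFA σ Q) (r : ℕ) (α : List σ) (j : ℕ) : Prop :=
  ∀ k, 0 < k → k < min (r + 1) α.length → A.fk α k < A.gk α k →
    A.gk α k ≤ A.inC j (suff α k)

end Indexed

end GNFA

section ColexHelpers
variable {σ : Type*} [LinearOrder σ]

lemma lex_append_of_ne (A : List σ) {t : List σ} (ht : t ≠ []) :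
    List.Lex (· < ·) A (A ++ t) := by
  induction A with
  | nil =>
    cases t with
    | nil => exact absurd rfl ht
    | cons a l => exact List.Lex.nil
  | cons a l ih => exact List.Lex.cons ih

lemma lex_prefix_or (t : List σ) {A G : List σ} (h : List.Lex (· < ·) A G) :
    A <+: G ∨ List.Lex (· < ·) (A ++ t) G := by
  induction h with
  | nil => left; exact List.nil_prefix
  | @rel a l₁ b l₂ hab => right; exact List.Lex.rel hab
  | @cons a l₁ l₂ h ih =>
    rcases ih with h' | h'
    · left
      obtain ⟨t', rfl⟩ := h'
      exact ⟨t', rfl⟩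
    · right; exact List.Lex.cons h'

lemma colexLt_trans {a b c : List σ} (h1 : ColexLt a b) (h2 : ColexLt b c) :
    ColexLt a c :=
  List.lex_trans (fun h h' => lt_trans h h') h1 h2

lemma colexLt_asymm {a b : List σ} (h : ColexLt a b) : ¬ ColexLt b a :=
  List.lex_asymm (fun h h' => lt_asymm h h') h

lemma colex_total {a b : List σ} (h : ¬ ColexLt a b) : b = a ∨ ColexLt b a := by
  letI : IsTrichotomous (List σ) (List.Lex (· < ·)) := List.Lex.trichotomous _
  rcases trichotomous_of (List.Lex (· < ·)) a.reverse b.reverse with h' | h' | h'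
  · exact absurd h' h
  · left; exact (List.reverse_injective h').symm
  · right; exact h'

lemma colex_suffix_le {a d : List σ} (h : a <:+ d) : a = d ∨ ColexLt a d := by
  obtain ⟨t, rfl⟩ := h
  cases t with
  | nil => left; rfl
  | cons x xs =>
    right
    show List.Lex (· < ·) a.reverse ((x :: xs) ++ a).reverse
    rw [List.reverse_append]
    exact lex_append_of_ne _ (by simp)

lemma colex_three {a g d : List σ} (h1 : ColexLt a g) (h2 : a <:+ d) :
    a <:+ g ∨ ColexLt d g := by
  obtain ⟨t, rfl⟩ := h2
  rcases lex_prefix_or t.reverse h1 with h | h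
  · left; exact List.reverse_prefix.mp h
  · right
    show List.Lex (· < ·) (t ++ a).reverse g.reverse
    rw [List.reverse_append]
    exact h

end ColexHelpers

section RankHelpers
variable {Q : Type*} [Fintype Q] [LinearOrder Q]

lemma rankQ_le_of_lower {S : Set Q} (hS : ∀ ⦃x y : Q⦄, x ≤ y → y ∈ S → x ∈ S)
    {u : Q} (hu : u ∈ S) : rankQ u ≤ S.ncard :=
  Set.ncard_le_ncard (fun x hx => hS hx hu) S.toFinite

lemma mem_of_rankQ_le {S : Set Q} (hS : ∀ ⦃x y : Q⦄, x ≤ y → y ∈ S → x ∈ S)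
    {u : Q} (hu : rankQ u ≤ S.ncard) : u ∈ S := by
  by_contra h
  have hsub : S ⊆ {x : Q | x < u} := by
    intro v hv
    rcases lt_or_ge v u with h' | h'
    · exact h'
    · exact absurd (hS h' hv) h
  have h1 : S.ncard ≤ {x : Q | x < u}.ncard :=
    Set.ncard_le_ncard hsub (Set.toFinite _)
  have h2 : rankQ u = {x : Q | x < u}.ncard + 1 := by
    have he : {v : Q | v ≤ u} = insert u {x : Q | x < u} := by
      ext x
      simp [le_iff_lt_or_eq, or_comm]
    rw [rankQ, he, Set.ncard_insert_of_notMem (by simp) (Set.toFinite _)]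
  omega

end RankHelpers

namespace GNFA
variable {σ Q : Type*}

lemma exists_I (A : GNFA σ Q) (hA : A.Standard) (u : Q) : ∃ β, A.I u β := by
  have h := hA.1 u
  induction h with
  | refl => exact ⟨[], I.base⟩
  | tail _ e ih =>
    obtain ⟨ρ, he⟩ := e
    obtain ⟨β, hβ⟩ := ih
    exact ⟨β ++ ρ, hβ.step he⟩

variable [LinearOrder σ]

lemma gprec_lower [LinearOrder Q] (A : GNFA σ Q) (hA : A.Standard)
    (hW1 : ∀ u v : Q, u ≤ v → A.Preceq u v) (α : List σ) :
    ∀ ⦃x y : Q⦄, x ≤ y → y ∈ A.Gprec α → x ∈ A.Gprec α := by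
  intro x y hxy hy γ hγ
  by_cases hmem : A.I y γ
  · exact hy γ hmem
  · obtain ⟨β, hβ⟩ := A.exists_I hA y
    have h := hW1 x y hxy γ β hγ hβ (fun hc => hmem hc.1.2)
    exact colexLt_trans h (hy β hβ)

lemma gprecSuf_lower [LinearOrder Q] (A : GNFA σ Q) (hA : A.Standard)
    (hW1 : ∀ u v : Q, u ≤ v → A.Preceq u v) (p : List σ) :
    ∀ ⦃x y : Q⦄, x ≤ y → y ∈ A.GprecSuf p → x ∈ A.GprecSuf p := by
  intro x y hxy hy
  by_cases hx : x ∈ A.Gprec p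
  · exact Or.inl hx
  · have hx' : ∃ γ, A.I x γ ∧ ¬ ColexLt γ p := by
      by_contra hc
      push_neg at hc
      exact hx (fun γ hγ => hc γ hγ)
    obtain ⟨γ, hγ, hγp⟩ := hx'
    rcases hy with hy | hy
    · exfalso
      by_cases hmem : A.I y γ
      · exact hγp (hy γ hmem)
      · obtain ⟨β, hβ⟩ := A.exists_I hA y
        have h := hW1 x y hxy γ β hγ hβ (fun hc => hmem hc.1.2)
        exact hγp (colexLt_trans h (hy β hβ))
    · obtain ⟨δ, hδ, hpδ⟩ := hy
      rcases colex_total hγp with hEq | hlt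
      · exact Or.inr ⟨γ, hγ, hEq ▸ List.suffix_rfl⟩
      · rcases colex_three hlt hpδ with hsg | hdg
        · exact Or.inr ⟨γ, hγ, hsg⟩
        · by_cases hsh : (A.I x γ ∧ A.I y γ) ∧ (A.I x δ ∧ A.I y δ)
          · exact Or.inr ⟨δ, hsh.2.1, hpδ⟩
          · exact absurd hdg (colexLt_asymm (hW1 x y hxy γ δ hγ hδ hsh))

end GNFA

/-- Let `A` be a Wheeler `r`-GNFA with Wheeler order `≤` and
`α ≠ ε`. With `i*`, `j°` and `h* = max{|G^≺(α)|, i*, j°}` as in the context,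
if `h* > |G^≺(α)|`, `|G^≺(α)| < f ≤ |Q|` and some `β ∈ I_{Q[f]}` satisfies
`β ≺ α`, then `Q[f] ∈ G_⊣(α)`. -/
theorem mem_gsuf_of_lt {σ Q : Type*} [Fintype σ] [LinearOrder σ]
    [Fintype Q] [LinearOrder Q] (A : GNFA σ Q)
    (hA : A.Standard) (hW : A.IsWheeler) (r : ℕ) (hr : A.Bounded r)
    (α : List σ) (hα : α ≠ [])
    (istar : ℕ) (hi_le : istar ≤ Fintype.card Q) (hi : A.Icond α istar)
    (hi_max : ∀ i ≤ Fintype.card Q, A.Icond α i → i ≤ istar)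
    (jo : ℕ) (hjo_le : jo ≤ Fintype.card Q) (hjo : A.Jcond2 r α jo)
    (hjo_min : ∀ j ≤ Fintype.card Q, A.Jcond2 r α j → jo ≤ j)
    (hgt : (A.Gprec α).ncard < max (max (A.Gprec α).ncard istar) jo)
    (f : ℕ) (hf1 : (A.Gprec α).ncard < f) (hf2 : f ≤ Fintype.card Q)
    (u : Q) (hu : rankQ u = f) (hβ : ∃ β, GNFA.I A u β ∧ ColexLt β α) :
    u ∈ A.Gsuf α := by
  classical
  obtain ⟨β, hβI, hβα⟩ := hβ
  have hW1 := hW.1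
  have hulow := A.gprec_lower hA hW1 α
  have hunot : u ∉ A.Gprec α := by
    intro h
    have h2 := rankQ_le_of_lower hulow h
    rw [hu] at h2
    omega
  have hunot' : ∃ γ, GNFA.I A u γ ∧ ¬ ColexLt γ α := by
    by_contra hc
    push_neg at hc
    exact hunot (fun γ hγ => hc γ hγ)
  obtain ⟨γ, hγI, hγα⟩ := hunot'
  rcases colex_total hγα with hEq | hlt
  · exact ⟨γ, hγI, hEq ▸ List.suffix_rfl⟩
  -- hlt : ColexLt α γ.  Produce a state carrying a string with suffix α.
  have hv : ∃ v : Q, ∃ δ, GNFA.I A v δ ∧ α <:+ δ := by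
    have hcase : (A.Gprec α).ncard < istar ∨ (A.Gprec α).ncard < jo := by
      rcases lt_max_iff.mp hgt with h | h
      · rcases lt_max_iff.mp h with h' | h'
        · omega
        · exact Or.inl h'
      · exact Or.inr h
    rcases hcase with hcase | hcase
    · obtain ⟨u₀, _, ρ, ⟨w, hw⟩, hsuf⟩ := hi (by omega)
      obtain ⟨δ, hδ⟩ := A.exists_I hA w
      exact ⟨u₀, δ ++ ρ, hδ.step hw, hsuf.trans (List.suffix_append δ ρ)⟩
    · -- jo > |G^≺(α)| : Jcond2 fails at m := |G^≺(α)|, giving some k with f_k < g_k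
      have hmle : (A.Gprec α).ncard ≤ Fintype.card Q := by
        have h1 : (A.Gprec α).ncard ≤ (Set.univ : Set Q).ncard :=
          Set.ncard_le_ncard (Set.subset_univ _) (Set.toFinite _)
        simpa [Set.ncard_univ] using h1
      have hnot : ¬ A.Jcond2 r α (A.Gprec α).ncard := by
        intro hc
        have := hjo_min _ hmle hc
        omega
      rw [GNFA.Jcond2] at hnot
      push_neg at hnot
      obtain ⟨k, hk0, hkmin, hfg, -⟩ := hnot
      simp only [GNFA.fk, GNFA.gk, GNFA.outC] at hfg
      set p : List σ := pref α (α.length - k) with hp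
      set st : List σ := suff α k with hst
      -- an edge labeled st leaving a state of G^≺_⊣(p) \ G^≺(p)
      have hex : ∃ e : Q × Q × List σ,
          (e ∈ A.E ∧ rankQ e.1 ≤ (A.GprecSuf p).ncard ∧ e.2.2 = st) ∧
          ¬ rankQ e.1 ≤ (A.Gprec p).ncard := by
        by_contra hc
        push_neg at hc
        have hsub : {e : Q × Q × List σ |
              e ∈ A.E ∧ rankQ e.1 ≤ (A.GprecSuf p).ncard ∧ e.2.2 = st}
            ⊆ {e : Q × Q × List σ |
              e ∈ A.E ∧ rankQ e.1 ≤ (A.Gprec p).ncard ∧ e.2.2 = st} :=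
          fun e he => ⟨he.1, hc e he, he.2.2⟩
        have hfin : {e : Q × Q × List σ |
              e ∈ A.E ∧ rankQ e.1 ≤ (A.Gprec p).ncard ∧ e.2.2 = st}.Finite :=
          A.E.finite_toSet.subset (fun e he => he.1)
        have := Set.ncard_le_ncard hsub hfin
        omega
      obtain ⟨⟨w, w', lbl⟩, ⟨hwE, hwrk, hlbl⟩, hwgt⟩ := hex
      simp only at hlbl hwrk hwgt
      subst hlbl
      have hwmem : w ∈ A.GprecSuf p :=
        mem_of_rankQ_le (A.gprecSuf_lower hA hW1 p) hwrk
      have hwnot : w ∉ A.Gprec p := by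
        intro h
        exact hwgt (rankQ_le_of_lower (A.gprec_lower hA hW1 p) h)
      rcases hwmem with h | h
      · exact absurd h hwnot
      · obtain ⟨δ, hδI, hpδ⟩ := h
        refine ⟨w', δ ++ st, hδI.step hwE, ?_⟩
        have hps : p ++ st = α := List.take_append_drop _ α
        obtain ⟨t, rfl⟩ := hpδ
        rw [List.append_assoc, hps]
        exact List.suffix_append t α
  obtain ⟨v, δ', hδ'I, hαδ'⟩ := hv
  rcases colex_three hlt hαδ' with hsg | hdg
  · exact ⟨γ, hγI, hsg⟩
  · rcases le_or_gt v u with hvu | huv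
    · by_cases hsh : (GNFA.I A v δ' ∧ GNFA.I A u δ') ∧ (GNFA.I A v β ∧ GNFA.I A u β)
      · exact ⟨δ', hsh.1.2, hαδ'⟩
      · exfalso
        have h := hW1 v u hvu δ' β hδ'I hβI hsh
        have hble : ColexLt β δ' := by
          rcases colex_suffix_le hαδ' with hEq2 | h2
          · exact hEq2 ▸ hβα
          · exact colexLt_trans hβα h2
        exact colexLt_asymm h hble
    · by_cases hsh : (GNFA.I A u γ ∧ GNFA.I A v γ) ∧ (GNFA.I A u δ' ∧ GNFA.I A v δ')
      · exact ⟨δ', hsh.2.1, hαδ'⟩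
      · exact absurd hdg (colexLt_asymm (hW1 u v huv.le γ δ' hγI hδ'I hsh))
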